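/- Let x, x₋, x̄₊ be centered, square-integrable ℝⁿ-valued random vectors with E[x xᵀ] = I, and set P₋ = E[x₋ x₋ᵀ], P̄₊ = E[x̄₊ x̄₊ᵀ], Q₋ = I − P₋, Q̄₊ = I − P̄₊, all assumed invertible. Assume E[x x₋ᵀ] = P₋, E[x x̄₊ᵀ] = P̄₊, and E[x̄₊ x₋ᵀ] = P̄₊ P₋. Define x̂ = Q (Q₋^{-1} x₋ + Q̄₊^{-1} x̄₊) with Q = (Q₋^{-1} + Q̄₊^{-1} − I)^{-1} (assumed to exist). Then E[(x − x̂) x₋ᵀ] = 0 and E[(x − x̂) x̄₊ᵀ] = 0. -/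

import Mathlib

open Matrix MeasureTheory

/-- Cross-covariance matrix E[x yᵀ] of two (centered) random vectors. -/
noncomputable def cov {Ω : Type*} [MeasurableSpace Ω] (ℙ : Measure Ω) {n m : ℕ}
    (x : Ω → Fin n → ℝ) (y : Ω → Fin m → ℝ) : Matrix (Fin n) (Fin m) ℝ :=
  Matrix.of fun i j => ∫ ω, x ω i * y ω j ∂ℙ

section Aux

variable {Ω : Type*} [MeasurableSpace Ω] {ℙ : Measure Ω} {n : ℕ}

lemma integrable_mul_of_memℒp2 {f g : Ω → ℝ} (hf : MemLp f 2 ℙ) (hg : MemLp g 2 ℙ) :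
    Integrable (fun ω => f ω * g ω) ℙ := by
  have h : MemLp (f • g) 1 ℙ := hg.smul hf
  have := memLp_one_iff_integrable.mp h
  exact this

lemma cov_sub_left (a b y : Ω → Fin n → ℝ)
    (ha : ∀ i j, Integrable (fun ω => a ω i * y ω j) ℙ)
    (hb : ∀ i j, Integrable (fun ω => b ω i * y ω j) ℙ) :
    cov ℙ (fun ω => a ω - b ω) y = cov ℙ a y - cov ℙ b y := by
  ext i j
  simp only [cov, Matrix.sub_apply, Matrix.of_apply, Pi.sub_apply, sub_mul]
  exact integral_sub (ha i j) (hb i j)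

lemma cov_mulVec (A : Matrix (Fin n) (Fin n) ℝ) (v y : Ω → Fin n → ℝ)
    (hv : ∀ i j, Integrable (fun ω => v ω i * y ω j) ℙ) :
    cov ℙ (fun ω => A.mulVec (v ω)) y = A * cov ℙ v y := by
  ext i j
  simp only [cov, Matrix.of_apply, Matrix.mul_apply, Matrix.mulVec, dotProduct]
  rw [show (fun ω => (∑ k, A i k * v ω k) * y ω j)
      = fun ω => ∑ k, A i k * (v ω k * y ω j) by
    funext ω; rw [Finset.sum_mul]; exact Finset.sum_congr rfl fun k _ => by ring]
  rw [integral_finset_sum _ fun k _ => (hv k j).const_mul _]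
  exact Finset.sum_congr rfl fun k _ => integral_const_mul _ _

lemma cov_add_left (a b y : Ω → Fin n → ℝ)
    (ha : ∀ i j, Integrable (fun ω => a ω i * y ω j) ℙ)
    (hb : ∀ i j, Integrable (fun ω => b ω i * y ω j) ℙ) :
    cov ℙ (fun ω => a ω + b ω) y = cov ℙ a y + cov ℙ b y := by
  ext i j
  simp only [cov, Matrix.add_apply, Matrix.of_apply, Pi.add_apply, add_mul]
  exact integral_add (ha i j) (hb i j)

lemma cov_transpose (a y : Ω → Fin n → ℝ) :
    cov ℙ a y = (cov ℙ y a)ᵀ := by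
  ext i j
  simp only [cov, Matrix.of_apply, Matrix.transpose_apply, mul_comm]

end Aux

theorem stmt_10 {Ω : Type*} [MeasurableSpace Ω] (ℙ : Measure Ω) [IsProbabilityMeasure ℙ]
    {n : ℕ} (x xm xbp xhat : Ω → Fin n → ℝ)
    (hx2 : ∀ i, MemLp (fun ω => x ω i) 2 ℙ)
    (hxm2 : ∀ i, MemLp (fun ω => xm ω i) 2 ℙ)
    (hxbp2 : ∀ i, MemLp (fun ω => xbp ω i) 2 ℙ)
    (hx0 : ∀ i, ∫ ω, x ω i ∂ℙ = 0)
    (hxm0 : ∀ i, ∫ ω, xm ω i ∂ℙ = 0)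
    (hxbp0 : ∀ i, ∫ ω, xbp ω i ∂ℙ = 0)
    (hnorm : cov ℙ x x = 1)
    (Qm Qbp Q : Matrix (Fin n) (Fin n) ℝ)
    (hQm : Qm = 1 - cov ℙ xm xm) (hQbp : Qbp = 1 - cov ℙ xbp xbp)
    (hQminv : IsUnit Qm.det) (hQbpinv : IsUnit Qbp.det)
    (hcross1 : cov ℙ x xm = cov ℙ xm xm)
    (hcross2 : cov ℙ x xbp = cov ℙ xbp xbp)
    (hcross3 : cov ℙ xbp xm = cov ℙ xbp xbp * cov ℙ xm xm)
    (hQinv : IsUnit (Qm⁻¹ + Qbp⁻¹ - 1).det)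
    (hQ : Q = (Qm⁻¹ + Qbp⁻¹ - 1)⁻¹)
    (hxhat : xhat = fun ω => Q.mulVec (Qm⁻¹.mulVec (xm ω) + Qbp⁻¹.mulVec (xbp ω))) :
    cov ℙ (fun ω => x ω - xhat ω) xm = 0 ∧ cov ℙ (fun ω => x ω - xhat ω) xbp = 0 := by
  -- integrability of all relevant products
  have hmm : ∀ i j, Integrable (fun ω => xm ω i * xm ω j) ℙ :=
    fun i j => integrable_mul_of_memℒp2 (hxm2 i) (hxm2 j)
  have hbm : ∀ i j, Integrable (fun ω => xbp ω i * xm ω j) ℙ :=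
    fun i j => integrable_mul_of_memℒp2 (hxbp2 i) (hxm2 j)
  have hmb : ∀ i j, Integrable (fun ω => xm ω i * xbp ω j) ℙ :=
    fun i j => integrable_mul_of_memℒp2 (hxm2 i) (hxbp2 j)
  have hbb : ∀ i j, Integrable (fun ω => xbp ω i * xbp ω j) ℙ :=
    fun i j => integrable_mul_of_memℒp2 (hxbp2 i) (hxbp2 j)
  have hxm : ∀ i j, Integrable (fun ω => x ω i * xm ω j) ℙ :=
    fun i j => integrable_mul_of_memℒp2 (hx2 i) (hxm2 j)
  have hxb : ∀ i j, Integrable (fun ω => x ω i * xbp ω j) ℙ :=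
    fun i j => integrable_mul_of_memℒp2 (hx2 i) (hxbp2 j)
  -- integrability of mulVec products
  have hmulVec : ∀ (A : Matrix (Fin n) (Fin n) ℝ) (v y : Ω → Fin n → ℝ),
      (∀ i j, Integrable (fun ω => v ω i * y ω j) ℙ) →
      ∀ i j, Integrable (fun ω => A.mulVec (v ω) i * y ω j) ℙ := by
    intro A v y hv i j
    have : (fun ω => A.mulVec (v ω) i * y ω j)
        = fun ω => ∑ k, A i k * (v ω k * y ω j) := by
      funext ω
      simp only [Matrix.mulVec, dotProduct, Finset.sum_mul]
      exact Finset.sum_congr rfl fun k _ => by ring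
    rw [this]
    exact integrable_finset_sum _ fun k _ => (hv k j).const_mul _
  have hinnerm : ∀ i j, Integrable (fun ω =>
      (Qm⁻¹.mulVec (xm ω) + Qbp⁻¹.mulVec (xbp ω)) i * xm ω j) ℙ := by
    intro i j
    have h1 := hmulVec Qm⁻¹ xm xm hmm i j
    have h2 := hmulVec Qbp⁻¹ xbp xm hbm i j
    simp only [Pi.add_apply, add_mul]; exact h1.add h2
  have hinnerb : ∀ i j, Integrable (fun ω =>
      (Qm⁻¹.mulVec (xm ω) + Qbp⁻¹.mulVec (xbp ω)) i * xbp ω j) ℙ := by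
    intro i j
    have h1 := hmulVec Qm⁻¹ xm xbp hmb i j
    have h2 := hmulVec Qbp⁻¹ xbp xbp hbb i j
    simp only [Pi.add_apply, add_mul]; exact h1.add h2
  have hhatm : ∀ i j, Integrable (fun ω => xhat ω i * xm ω j) ℙ := by
    intro i j; rw [hxhat]
    exact hmulVec Q _ xm hinnerm i j
  have hhatb : ∀ i j, Integrable (fun ω => xhat ω i * xbp ω j) ℙ := by
    intro i j; rw [hxhat]
    exact hmulVec Q _ xbp hinnerb i j
  -- cov of xhat with xm and xbp
  set Pm := cov ℙ xm xm with hPm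
  set Pbp := cov ℙ xbp xbp with hPbp
  have hPmT : Pmᵀ = Pm := (cov_transpose xm xm).symm
  have hPbT : Pbpᵀ = Pbp := (cov_transpose xbp xbp).symm
  have hPmsymm : cov ℙ xm xbp = Pm * Pbp := by
    rw [cov_transpose, hcross3, Matrix.transpose_mul, hPmT, hPbT]
  have hcovhatm : cov ℙ xhat xm = Q * (Qm⁻¹ * Pm + Qbp⁻¹ * (Pbp * Pm)) := by
    rw [hxhat, cov_mulVec Q _ xm hinnerm,
      cov_add_left _ _ xm (hmulVec Qm⁻¹ xm xm hmm) (hmulVec Qbp⁻¹ xbp xm hbm),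
      cov_mulVec Qm⁻¹ xm xm hmm, cov_mulVec Qbp⁻¹ xbp xm hbm, hcross3]
  have hcovhatb : cov ℙ xhat xbp = Q * (Qm⁻¹ * (Pm * Pbp) + Qbp⁻¹ * Pbp) := by
    rw [hxhat, cov_mulVec Q _ xbp hinnerb,
      cov_add_left _ _ xbp (hmulVec Qm⁻¹ xm xbp hmb) (hmulVec Qbp⁻¹ xbp xbp hbb),
      cov_mulVec Qm⁻¹ xm xbp hmb, cov_mulVec Qbp⁻¹ xbp xbp hbb, hPmsymm]
  -- matrix algebra
  have hQmQ : Qm⁻¹ * Qm = 1 := Matrix.nonsing_inv_mul Qm hQminv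
  have hQbQ : Qbp⁻¹ * Qbp = 1 := Matrix.nonsing_inv_mul Qbp hQbpinv
  have hPm' : Pm = 1 - Qm := by rw [hQm, sub_sub_cancel]
  have hPb' : Pbp = 1 - Qbp := by rw [hQbp, sub_sub_cancel]
  have hQS : Q * (Qm⁻¹ + Qbp⁻¹ - 1) = 1 := by
    rw [hQ]; exact Matrix.nonsing_inv_mul _ hQinv
  have e3 : Qbp⁻¹ * (Qbp * Qm) = Qm := by rw [← Matrix.mul_assoc, hQbQ, Matrix.one_mul]
  have e4 : Qm⁻¹ * (Qm * Qbp) = Qbp := by rw [← Matrix.mul_assoc, hQmQ, Matrix.one_mul]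
  have key1 : Qm⁻¹ * Pm + Qbp⁻¹ * (Pbp * Pm) = (Qm⁻¹ + Qbp⁻¹ - 1) * Pm := by
    rw [hPm', hPb']
    simp only [Matrix.mul_sub, Matrix.sub_mul, Matrix.add_mul, Matrix.mul_one,
      Matrix.one_mul, hQmQ, hQbQ, e3, e4]
    abel
  have key2 : Qm⁻¹ * (Pm * Pbp) + Qbp⁻¹ * Pbp = (Qm⁻¹ + Qbp⁻¹ - 1) * Pbp := by
    rw [hPm', hPb']
    simp only [Matrix.mul_sub, Matrix.sub_mul, Matrix.add_mul, Matrix.mul_one,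
      Matrix.one_mul, hQmQ, hQbQ, e3, e4]
    abel
  have hfinalm : cov ℙ xhat xm = Pm := by
    rw [hcovhatm, key1, ← Matrix.mul_assoc, hQS, Matrix.one_mul]
  have hfinalb : cov ℙ xhat xbp = Pbp := by
    rw [hcovhatb, key2, ← Matrix.mul_assoc, hQS, Matrix.one_mul]
  constructor
  · rw [cov_sub_left x xhat xm hxm hhatm, hcross1, hfinalm, hPm, sub_self]
  · rw [cov_sub_left x xhat xbp hxb hhatb, hcross2, hfinalb, hPbp, sub_self]
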